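/- Suppose (𝒳, S, γ, (Λ_a)_{a∈A}) is a spectral decomposition system for a Euclidean space 𝔥 with {Λ_a : a ∈ A} closed in L(𝒳,𝔥). Let φ : 𝒳 → [−∞,+∞] be S-invariant and let X ∈ 𝔥. Then ∂_L(φ∘γ)(X) = {Λ_a y : y ∈ ∂_L φ(γ(X)), a ∈ A_X}. -/

import Mathlib

open Filter Topology Set Metric
open scoped RealInnerProductSpace

noncomputable section

/-- A spectral decomposition system `(𝒳, S, γ, (Λ_a)_{a ∈ A})` for the space `H`:
`S` acts on `𝒳` by linear isometries (via `act`), `γ : H → 𝒳` is the spectral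
mapping, each `Λ a : 𝒳 → H` is a linear isometry, and the axioms [A], [B], [C] hold,
with `τ` the `S`-invariant ordering mapping of axiom [A]. -/
structure SDS (𝒳 H : Type*) [NormedAddCommGroup 𝒳] [InnerProductSpace ℝ 𝒳]
    [NormedAddCommGroup H] [InnerProductSpace ℝ H]
    (S : Type*) [Group S] (A : Type*) where
  act : S →* (𝒳 ≃ₗᵢ[ℝ] 𝒳)
  γ : H → 𝒳
  Λ : A → 𝒳 →ₗᵢ[ℝ] H
  τ : 𝒳 → 𝒳
  τ_inv : ∀ (s : S) (x : 𝒳), τ (act s x) = τ x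
  τ_orbit : ∀ x : 𝒳, ∃ s : S, τ x = act s x
  γΛ : ∀ (a : A) (x : 𝒳), γ (Λ a x) = τ x
  decomp : ∀ X : H, ∃ a : A, X = Λ a (γ X)
  inner_le : ∀ X Y : H, ⟪X, Y⟫ ≤ ⟪γ X, γ Y⟫

variable {𝒳 H S A : Type*} [NormedAddCommGroup 𝒳] [InnerProductSpace ℝ 𝒳]
    [NormedAddCommGroup H] [InnerProductSpace ℝ H] [Group S]

/-- The set `{Λ_a : a ∈ A}`, regarded as a subset of the space `L(𝒳, H)` of
continuous linear maps with the operator norm. -/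
def SDS.LambdaSet (𝔖 : SDS 𝒳 H S A) : Set (𝒳 →L[ℝ] H) :=
  {L | ∃ a : A, L = (𝔖.Λ a).toContinuousLinearMap}

/-- `A_X = {a ∈ A : X = Λ_a (γ X)}`. -/
def SDS.AX (𝔖 : SDS 𝒳 H S A) (X : H) : Set A := {a | X = 𝔖.Λ a (𝔖.γ X)}

/-- The Fréchet subdifferential of an extended-real-valued `f` at `x`: empty unless
`f x` is finite, in which case it is the set of `y` with
`liminf_{z → x, z ≠ x} (f(z) - f(x) - ⟨z - x, y⟩)/‖z - x‖ ≥ 0`, in ε-δ form. -/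
def fSubdiff {E : Type*} [NormedAddCommGroup E] [InnerProductSpace ℝ E]
    (f : E → EReal) (x : E) : Set E :=
  {y | (∃ r : ℝ, f x = (r : EReal)) ∧ ∀ ε : ℝ, 0 < ε → ∃ δ : ℝ, 0 < δ ∧
    ∀ z : E, ‖z - x‖ < δ → f x + ((⟪z - x, y⟫ - ε * ‖z - x‖ : ℝ) : EReal) ≤ f z}

/-- The limiting subdifferential of `f` at `x`: empty unless `f x` is finite, in which
case it is the set of limits `y` of sequences `y_n ∈ ∂_F f(x_n)` with `x_n → x` and
`f(x_n) → f(x)`. -/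
def lSubdiff {E : Type*} [NormedAddCommGroup E] [InnerProductSpace ℝ E]
    (f : E → EReal) (x : E) : Set E :=
  {y | (∃ r : ℝ, f x = (r : EReal)) ∧ ∃ xn yn : ℕ → E,
    (∀ n, yn n ∈ fSubdiff f (xn n)) ∧ Tendsto xn atTop (𝓝 x) ∧
    Tendsto (fun n => f (xn n)) atTop (𝓝 (f x)) ∧ Tendsto yn atTop (𝓝 y)}

/-! ### Auxiliary general lemmas -/

section Aux

variable {E F : Type*} [NormedAddCommGroup E] [NormedSpace ℝ E]
  [NormedAddCommGroup F] [NormedSpace ℝ F]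

lemma tendsto_of_norm_sub_le {u : ℕ → E} {x : E} {b : ℕ → ℝ}
    (h : ∀ n, ‖u n - x‖ ≤ b n) (hb : Tendsto b atTop (𝓝 0)) :
    Tendsto u atTop (𝓝 x) :=
  tendsto_iff_norm_sub_tendsto_zero.2 (squeeze_zero (fun n => norm_nonneg _) h hb)

lemma tendsto_clm_apply' {T : ℕ → E →L[ℝ] F} {L : E →L[ℝ] F} {u : ℕ → E} {x : E}
    (hT : Tendsto T atTop (𝓝 L)) (hu : Tendsto u atTop (𝓝 x)) :
    Tendsto (fun n => T n (u n)) atTop (𝓝 (L x)) :=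
  (isBoundedBilinearMap_apply.continuous.tendsto (L, x)).comp (hT.prodMk_nhds hu)

end Aux

/-! ### Basic lemmas about spectral decomposition systems -/

namespace SDS

variable (𝔖 : SDS 𝒳 H S A)

include 𝔖 in
lemma nonemptyA : Nonempty A := ⟨(𝔖.decomp 0).choose⟩

lemma norm_tau (x : 𝒳) : ‖𝔖.τ x‖ = ‖x‖ := by
  obtain ⟨s, hs⟩ := 𝔖.τ_orbit x
  rw [hs]; exact (𝔖.act s).norm_map x

lemma inner_le_tau (x y : 𝒳) : ⟪x, y⟫ ≤ ⟪𝔖.τ x, 𝔖.τ y⟫ := by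
  obtain ⟨a⟩ := 𝔖.nonemptyA
  have h1 : ⟪x, y⟫ = ⟪𝔖.Λ a x, 𝔖.Λ a y⟫ := ((𝔖.Λ a).inner_map_map x y).symm
  have h2 := 𝔖.inner_le (𝔖.Λ a x) (𝔖.Λ a y)
  rw [𝔖.γΛ a x, 𝔖.γΛ a y] at h2
  linarith

lemma norm_gamma (X : H) : ‖𝔖.γ X‖ = ‖X‖ := by
  obtain ⟨a, ha⟩ := 𝔖.decomp X
  conv_rhs => rw [ha]
  rw [(𝔖.Λ a).norm_map]

lemma gamma_lip (X Y : H) : ‖𝔖.γ X - 𝔖.γ Y‖ ≤ ‖X - Y‖ := by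
  have h := 𝔖.inner_le X Y
  have e1 := norm_sub_sq_real (𝔖.γ X) (𝔖.γ Y)
  have e2 := norm_sub_sq_real X Y
  rw [𝔖.norm_gamma X, 𝔖.norm_gamma Y] at e1
  nlinarith [norm_nonneg (𝔖.γ X - 𝔖.γ Y), norm_nonneg (X - Y)]

lemma tau_lip (x y : 𝒳) : ‖𝔖.τ x - 𝔖.τ y‖ ≤ ‖x - y‖ := by
  have h := 𝔖.inner_le_tau x y
  have e1 := norm_sub_sq_real (𝔖.τ x) (𝔖.τ y)
  have e2 := norm_sub_sq_real x y
  rw [𝔖.norm_tau x, 𝔖.norm_tau y] at e1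
  nlinarith [norm_nonneg (𝔖.τ x - 𝔖.τ y), norm_nonneg (x - y)]

lemma tau_gamma (X : H) : 𝔖.τ (𝔖.γ X) = 𝔖.γ X := by
  obtain ⟨a, ha⟩ := 𝔖.decomp X
  have h := 𝔖.γΛ a (𝔖.γ X)
  rw [← ha] at h
  exact h.symm

variable {φ : 𝒳 → EReal}

lemma phi_tau (hφ : ∀ (s : S) (x : 𝒳), φ (𝔖.act s x) = φ x) (x : 𝒳) :
    φ (𝔖.τ x) = φ x := by
  obtain ⟨s, hs⟩ := 𝔖.τ_orbit x
  rw [hs, hφ]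

lemma phi_gamma_lambda (hφ : ∀ (s : S) (x : 𝒳), φ (𝔖.act s x) = φ x) (b : A) (x : 𝒳) :
    φ (𝔖.γ (𝔖.Λ b x)) = φ x := by
  rw [𝔖.γΛ, 𝔖.phi_tau hφ]

section FinDim

variable [FiniteDimensional ℝ 𝒳] [FiniteDimensional ℝ H]

lemma adj_inner (a : A) (x : 𝒳) (Y : H) :
    ⟪x, ContinuousLinearMap.adjoint (𝔖.Λ a).toContinuousLinearMap Y⟫ = ⟪𝔖.Λ a x, Y⟫ := by
  rw [ContinuousLinearMap.adjoint_inner_right]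
  simp [LinearIsometry.coe_toContinuousLinearMap]

lemma adj_norm_le (a : A) (Y : H) :
    ‖ContinuousLinearMap.adjoint (𝔖.Λ a).toContinuousLinearMap Y‖ ≤ ‖Y‖ := by
  set u := ContinuousLinearMap.adjoint (𝔖.Λ a).toContinuousLinearMap Y with hu
  have h1 : ⟪𝔖.Λ a u, Y⟫ = ‖u‖^2 := by
    rw [← 𝔖.adj_inner a u Y, ← hu]; exact real_inner_self_eq_norm_sq u
  have h2 : ⟪𝔖.Λ a u, Y⟫ ≤ ‖u‖ * ‖Y‖ := by
    have := real_inner_le_norm (𝔖.Λ a u) Y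
    rwa [(𝔖.Λ a).norm_map] at this
  nlinarith [norm_nonneg u, norm_nonneg Y]

lemma norm_sub_lambda_adj_sq (a : A) (Y : H) :
    ‖Y - 𝔖.Λ a (ContinuousLinearMap.adjoint (𝔖.Λ a).toContinuousLinearMap Y)‖^2
      = ‖Y‖^2 - ‖ContinuousLinearMap.adjoint (𝔖.Λ a).toContinuousLinearMap Y‖^2 := by
  set u := ContinuousLinearMap.adjoint (𝔖.Λ a).toContinuousLinearMap Y with hu
  have h1 : ⟪Y, 𝔖.Λ a u⟫ = ‖u‖^2 := by
    rw [real_inner_comm, ← 𝔖.adj_inner a u Y, ← hu]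
    exact real_inner_self_eq_norm_sq u
  have h2 : ‖𝔖.Λ a u‖ = ‖u‖ := (𝔖.Λ a).norm_map u
  have h3 := norm_sub_sq_real Y (𝔖.Λ a u)
  rw [h1, h2] at h3
  linarith

lemma lambdaSet_isCompact (hcl : IsClosed 𝔖.LambdaSet) : IsCompact 𝔖.LambdaSet := by
  apply Metric.isCompact_of_isClosed_isBounded hcl
  rw [isBounded_iff_forall_norm_le]
  refine ⟨1, fun L hL => ?_⟩
  obtain ⟨a, rfl⟩ := hL
  refine ContinuousLinearMap.opNorm_le_bound _ zero_le_one (fun x => ?_)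
  simp [LinearIsometry.coe_toContinuousLinearMap, LinearIsometry.norm_map]

end FinDim

lemma gamma_tendsto {u : ℕ → H} {x : H} (hu : Tendsto u atTop (𝓝 x)) :
    Tendsto (fun n => 𝔖.γ (u n)) atTop (𝓝 (𝔖.γ x)) := by
  apply tendsto_of_norm_sub_le (b := fun n => ‖u n - x‖)
  · exact fun n => 𝔖.gamma_lip _ _
  · exact tendsto_iff_norm_sub_tendsto_zero.1 hu


/-! ### Downward transfer of Fréchet subgradients -/

lemma down [FiniteDimensional ℝ 𝒳] [FiniteDimensional ℝ H]
    (hφ : ∀ (s : S) (x : 𝒳), φ (𝔖.act s x) = φ x) {X Y : H} {c : A}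
    (hc : X = 𝔖.Λ c (𝔖.γ X))
    (hY : Y ∈ fSubdiff (fun Z => φ (𝔖.γ Z)) X) :
    ContinuousLinearMap.adjoint (𝔖.Λ c).toContinuousLinearMap Y ∈ fSubdiff φ (𝔖.γ X) := by
  simp only [fSubdiff, Set.mem_setOf_eq] at hY ⊢
  obtain ⟨hfin, hY⟩ := hY
  refine ⟨hfin, fun ε hε => ?_⟩
  obtain ⟨δ, hδ, hineq⟩ := hY ε hε
  refine ⟨δ, hδ, fun z hz => ?_⟩
  have hsub : 𝔖.Λ c z - X = 𝔖.Λ c (z - 𝔖.γ X) := by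
    rw [map_sub, ← hc]
  have hnorm : ‖𝔖.Λ c z - X‖ = ‖z - 𝔖.γ X‖ := by
    rw [hsub, (𝔖.Λ c).norm_map]
  have hinner : ⟪𝔖.Λ c z - X, Y⟫ = ⟪z - 𝔖.γ X, ContinuousLinearMap.adjoint (𝔖.Λ c).toContinuousLinearMap Y⟫ := by
    rw [hsub, 𝔖.adj_inner]
  have h := hineq (𝔖.Λ c z) (by rw [hnorm]; exact hz)
  rw [hinner, hnorm, 𝔖.phi_gamma_lambda hφ c z] at h
  exact h

/-! ### Upward transfer of Fréchet subgradients -/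

lemma up (hφ : ∀ (s : S) (x : 𝒳), φ (𝔖.act s x) = φ x) {x v : 𝒳}
    (hv : v ∈ fSubdiff φ x) (b : A) :
    𝔖.Λ b v ∈ fSubdiff (fun Z => φ (𝔖.γ Z)) (𝔖.Λ b x) := by
  simp only [fSubdiff, Set.mem_setOf_eq] at hv ⊢
  obtain ⟨⟨r, hr⟩, hvi⟩ := hv
  refine ⟨⟨r, by rw [𝔖.phi_gamma_lambda hφ]; exact hr⟩, ?_⟩
  intro ε' hε'
  set C : ℝ := 1 + 4*‖v‖/ε' with hC
  have hCpos : 0 < C := by rw [hC]; positivity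
  have hεp : 0 < ε'/(4*C) := div_pos hε' (by linarith)
  obtain ⟨δ, hδ, hineq⟩ := hvi (ε'/(4*C)) hεp
  refine ⟨δ/C, div_pos hδ hCpos, fun Z hZ => ?_⟩
  have hgW : φ (𝔖.γ (𝔖.Λ b x)) = (r : EReal) := by
    rw [𝔖.phi_gamma_lambda hφ]; exact hr
  rcases eq_or_lt_of_le (norm_nonneg (Z - 𝔖.Λ b x)) with h0 | hdpos
  · have hZW : Z = 𝔖.Λ b x := by
      rw [← sub_eq_zero]
      exact norm_eq_zero.1 h0.symm
    subst hZW
    simp [hgW]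
  · set d : ℝ := ‖Z - 𝔖.Λ b x‖ with hd
    set t : ℝ := 2*d/ε' with htdef
    have htpos : 0 < t := by rw [htdef]; exact div_pos (by linarith) hε'
    obtain ⟨s, hs⟩ := 𝔖.τ_orbit (x + t • v)
    set z : 𝒳 := (𝔖.act s).symm (𝔖.γ Z) with hzdef
    have hact : 𝔖.act s z = 𝔖.γ Z := (𝔖.act s).apply_symm_apply _
    have hφz : φ z = φ (𝔖.γ Z) := by
      calc φ z = φ (𝔖.act s z) := (hφ s z).symm
        _ = φ (𝔖.γ Z) := by rw [hact]
    -- norm bound : ‖z - x‖ ≤ C * d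
    have htv : ‖𝔖.τ (x + t • v) - 𝔖.act s x‖ = t * ‖v‖ := by
      rw [hs, ← map_sub, (𝔖.act s).norm_map, add_sub_cancel_left, norm_smul,
        Real.norm_eq_abs, abs_of_pos htpos]
    have h2 : ‖𝔖.γ Z - 𝔖.τ (x + t • v)‖ ≤ d + t*‖v‖ := by
      calc ‖𝔖.γ Z - 𝔖.τ (x + t • v)‖
          = ‖(𝔖.γ Z - 𝔖.γ (𝔖.Λ b x)) + (𝔖.γ (𝔖.Λ b x) - 𝔖.τ (x + t • v))‖ := by
            rw [sub_add_sub_cancel]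
        _ ≤ ‖𝔖.γ Z - 𝔖.γ (𝔖.Λ b x)‖ + ‖𝔖.γ (𝔖.Λ b x) - 𝔖.τ (x + t • v)‖ := norm_add_le _ _
        _ ≤ d + t*‖v‖ := by
            have ha1 : ‖𝔖.γ Z - 𝔖.γ (𝔖.Λ b x)‖ ≤ d := by
              rw [hd]; exact 𝔖.gamma_lip _ _
            have ha2 : ‖𝔖.γ (𝔖.Λ b x) - 𝔖.τ (x + t • v)‖ ≤ t*‖v‖ := by
              rw [𝔖.γΛ]
              refine le_trans (𝔖.tau_lip _ _) ?_
              rw [show x - (x + t • v) = -(t • v) by abel, norm_neg, norm_smul,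
                Real.norm_eq_abs, abs_of_pos htpos]
            linarith
    have hnz : ‖z - x‖ ≤ C * d := by
      have e1 : ‖z - x‖ = ‖𝔖.γ Z - 𝔖.act s x‖ := by
        rw [← (𝔖.act s).norm_map (z - x), map_sub, hact]
      have e2 : ‖𝔖.γ Z - 𝔖.act s x‖ ≤ (d + t*‖v‖) + t*‖v‖ := by
        calc ‖𝔖.γ Z - 𝔖.act s x‖
            = ‖(𝔖.γ Z - 𝔖.τ (x + t • v)) + (𝔖.τ (x + t • v) - 𝔖.act s x)‖ := by
              rw [sub_add_sub_cancel]
          _ ≤ ‖𝔖.γ Z - 𝔖.τ (x + t • v)‖ + ‖𝔖.τ (x + t • v) - 𝔖.act s x‖ := norm_add_le _ _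
          _ ≤ (d + t*‖v‖) + t*‖v‖ := by rw [htv]; linarith
      have e3 : (d + t*‖v‖) + t*‖v‖ = C * d := by
        rw [htdef, hC]; field_simp; ring
      rw [e1, ← e3]; exact e2
    have hzlt : ‖z - x‖ < δ := by
      have : C * d < δ := by
        rw [mul_comm]; exact (lt_div_iff₀ hCpos).1 hZ
      linarith
    -- key inequality
    have hkey : ⟪Z, 𝔖.Λ b x⟫ + t*⟪Z, 𝔖.Λ b v⟫ ≤ ⟪z, x⟫ + t*⟪z, v⟫ := by
      have h1 := 𝔖.inner_le Z (𝔖.Λ b (x + t • v))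
      rw [𝔖.γΛ, hs] at h1
      have h2 : ⟪𝔖.γ Z, 𝔖.act s (x + t • v)⟫ = ⟪z, x + t • v⟫ := by
        rw [← hact]; exact (𝔖.act s).inner_map_map z (x + t • v)
      rw [h2] at h1
      have h3 : (𝔖.Λ b) (x + t • v) = 𝔖.Λ b x + t • 𝔖.Λ b v := by
        rw [map_add, map_smul]
      rw [h3] at h1
      rw [inner_add_right, real_inner_smul_right] at h1
      rw [inner_add_right, real_inner_smul_right] at h1
      linarith
    -- quadratic estimate
    have hzn : ‖z‖^2 = ‖Z‖^2 := by
      rw [hzdef, ((𝔖.act s).symm).norm_map, 𝔖.norm_gamma]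
    have hxn : ‖x‖^2 = ‖𝔖.Λ b x‖^2 := by rw [(𝔖.Λ b).norm_map]
    have q1 := norm_sub_sq_real z x
    have q2 := norm_sub_sq_real Z (𝔖.Λ b x)
    rw [← hd] at q2
    have hq : ⟪z, x⟫ - ⟪Z, 𝔖.Λ b x⟫ ≤ d^2/2 := by
      nlinarith [sq_nonneg ‖z - x‖]
    have hdiv : t * (⟪Z, 𝔖.Λ b v⟫ - ⟪z, v⟫) ≤ d^2/2 := by
      rw [mul_sub]; linarith
    have h5 : ⟪Z, 𝔖.Λ b v⟫ - ⟪z, v⟫ ≤ ε'*d/4 := by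
      have h6 : d^2/2 = t*(ε'*d/4) := by
        rw [htdef]; field_simp; ring
      rw [h6] at hdiv
      exact le_of_mul_le_mul_left hdiv htpos
    have hWx : ⟪𝔖.Λ b x, 𝔖.Λ b v⟫ = ⟪x, v⟫ := (𝔖.Λ b).inner_map_map x v
    have hlow : ⟪Z - 𝔖.Λ b x, 𝔖.Λ b v⟫ - ε'*d/4 ≤ ⟪z - x, v⟫ := by
      rw [inner_sub_left, inner_sub_left]
      linarith
    have hepsd : ε'/(4*C)*‖z - x‖ ≤ ε'*d/4 := by
      have h7 : ε'/(4*C)*‖z - x‖ ≤ ε'/(4*C)*(C*d) := by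
        apply mul_le_mul_of_nonneg_left hnz hεp.le
      have h8 : ε'/(4*C)*(C*d) = ε'*d/4 := by
        field_simp
      linarith
    have hF := hineq z hzlt
    calc φ (𝔖.γ (𝔖.Λ b x)) + ((⟪Z - 𝔖.Λ b x, 𝔖.Λ b v⟫ - ε' * d : ℝ) : EReal)
        = ((r + (⟪Z - 𝔖.Λ b x, 𝔖.Λ b v⟫ - ε' * d) : ℝ) : EReal) := by
          rw [hgW, EReal.coe_add]
      _ ≤ ((r + (⟪z - x, v⟫ - ε'/(4*C) * ‖z - x‖) : ℝ) : EReal) := by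
          apply EReal.coe_le_coe_iff.2
          have : 0 ≤ ε' * d := mul_nonneg hε'.le (by rw [hd]; exact norm_nonneg _)
          linarith
      _ = φ x + ((⟪z - x, v⟫ - ε'/(4*C) * ‖z - x‖ : ℝ) : EReal) := by
          rw [EReal.coe_add, hr]
      _ ≤ φ z := hF
      _ = φ (𝔖.γ Z) := hφz


/-! ### Approximate simultaneous decomposition for Fréchet subgradients -/

lemma approx [FiniteDimensional ℝ 𝒳] [FiniteDimensional ℝ H]
    (hcl : IsClosed 𝔖.LambdaSet) {X Y : H}
    (hY : Y ∈ fSubdiff (fun Z => φ (𝔖.γ Z)) X) {ε : ℝ} (hε : 0 < ε) :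
    ∃ a : A, X = 𝔖.Λ a (𝔖.γ X) ∧
      ‖Y - 𝔖.Λ a (ContinuousLinearMap.adjoint (𝔖.Λ a).toContinuousLinearMap Y)‖ ≤ ε := by
  simp only [fSubdiff, Set.mem_setOf_eq] at hY
  obtain ⟨⟨r, hr⟩, hYi⟩ := hY
  rcases eq_or_ne Y 0 with rfl | hY0
  · obtain ⟨a, ha⟩ := 𝔖.decomp X
    exact ⟨a, ha, by simp [hε.le]⟩
  · have hnY : 0 < ‖Y‖ := norm_pos_iff.2 hY0
    set ε₀ : ℝ := ε^2/(4*‖Y‖) with hε₀def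
    have hε₀ : 0 < ε₀ := by rw [hε₀def]; positivity
    obtain ⟨δ, hδ, hineq⟩ := hYi ε₀ hε₀
    set t : ℕ → ℝ := fun n => (δ/(2*‖Y‖+1)) * (1/((n:ℝ)+1)) with htdef
    have htpos : ∀ n, 0 < t n := by
      intro n; rw [htdef]; positivity
    have htple : ∀ n, t n ≤ δ/(2*‖Y‖+1) := by
      intro n
      rw [htdef]
      have h1 : 1/((n:ℝ)+1) ≤ 1 := by
        rw [div_le_one (by positivity)]
        have : (0:ℝ) ≤ (n:ℝ) := Nat.cast_nonneg n
        linarith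
      calc (δ/(2*‖Y‖+1)) * (1/((n:ℝ)+1)) ≤ (δ/(2*‖Y‖+1)) * 1 :=
            mul_le_mul_of_nonneg_left h1 (by positivity)
        _ = δ/(2*‖Y‖+1) := mul_one _
    have htb : ∀ n, 2 * t n * ‖Y‖ < δ := by
      intro n
      have hq : 0 < δ/(2*‖Y‖+1) := by positivity
      have h2 : (δ/(2*‖Y‖+1)) * (2*‖Y‖+1) = δ := div_mul_cancel₀ δ (by positivity)
      nlinarith [htple n, htpos n]
    have hcex : ∀ n, ∃ a : A, X + t n • Y = 𝔖.Λ a (𝔖.γ (X + t n • Y)) :=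
      fun n => 𝔖.decomp _
    choose c hc using hcex
    have hZX : ∀ n, ‖𝔖.Λ (c n) (𝔖.γ X) - X‖ ≤ 2 * t n * ‖Y‖ := by
      intro n
      have e1 : 𝔖.Λ (c n) (𝔖.γ X) - (X + t n • Y)
          = 𝔖.Λ (c n) (𝔖.γ X - 𝔖.γ (X + t n • Y)) := by
        rw [map_sub, ← hc n]
      have e2 : ‖𝔖.Λ (c n) (𝔖.γ X) - (X + t n • Y)‖ ≤ t n * ‖Y‖ := by
        rw [e1, (𝔖.Λ (c n)).norm_map]
        refine le_trans (𝔖.gamma_lip _ _) ?_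
        rw [show X - (X + t n • Y) = -(t n • Y) by abel, norm_neg, norm_smul,
          Real.norm_eq_abs, abs_of_pos (htpos n)]
      have e3 : 𝔖.Λ (c n) (𝔖.γ X) - X
          = (𝔖.Λ (c n) (𝔖.γ X) - (X + t n • Y)) + t n • Y := by abel
      calc ‖𝔖.Λ (c n) (𝔖.γ X) - X‖
          ≤ ‖𝔖.Λ (c n) (𝔖.γ X) - (X + t n • Y)‖ + ‖t n • Y‖ := by
            rw [e3]; exact norm_add_le _ _
        _ ≤ t n * ‖Y‖ + t n * ‖Y‖ := by
            rw [norm_smul, Real.norm_eq_abs, abs_of_pos (htpos n)]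
            linarith [e2]
        _ = 2 * t n * ‖Y‖ := by ring
    have hadj : ∀ n, ‖Y‖ - 2*ε₀
        ≤ ‖ContinuousLinearMap.adjoint (𝔖.Λ (c n)).toContinuousLinearMap Y‖ := by
      intro n
      set u := ContinuousLinearMap.adjoint (𝔖.Λ (c n)).toContinuousLinearMap Y with hu
      have hfZ : φ (𝔖.γ (𝔖.Λ (c n) (𝔖.γ X))) = φ (𝔖.γ X) := by
        rw [𝔖.γΛ, 𝔖.tau_gamma]
      have happ := hineq (𝔖.Λ (c n) (𝔖.γ X)) (lt_of_le_of_lt (hZX n) (htb n))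
      rw [hfZ, hr, ← EReal.coe_add, EReal.coe_le_coe_iff] at happ
      have hc0 : ⟪𝔖.Λ (c n) (𝔖.γ X) - X, Y⟫ ≤ ε₀ * (2 * t n * ‖Y‖) := by
        have h1 : ε₀ * ‖𝔖.Λ (c n) (𝔖.γ X) - X‖ ≤ ε₀ * (2 * t n * ‖Y‖) :=
          mul_le_mul_of_nonneg_left (hZX n) hε₀.le
        linarith
      have hXZ : X + t n • Y - 𝔖.Λ (c n) (𝔖.γ X)
          = 𝔖.Λ (c n) (𝔖.γ (X + t n • Y) - 𝔖.γ X) := by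
        rw [map_sub, ← hc n]
      have hupb : ⟪X + t n • Y - 𝔖.Λ (c n) (𝔖.γ X), Y⟫ ≤ (t n * ‖Y‖) * ‖u‖ := by
        rw [hXZ]
        have h2 : ⟪𝔖.Λ (c n) (𝔖.γ (X + t n • Y) - 𝔖.γ X), Y⟫
            = ⟪𝔖.γ (X + t n • Y) - 𝔖.γ X, u⟫ := (𝔖.adj_inner (c n) _ Y).symm
        rw [h2]
        calc ⟪𝔖.γ (X + t n • Y) - 𝔖.γ X, u⟫
            ≤ ‖𝔖.γ (X + t n • Y) - 𝔖.γ X‖ * ‖u‖ := real_inner_le_norm _ _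
          _ ≤ (t n * ‖Y‖) * ‖u‖ := by
              apply mul_le_mul_of_nonneg_right _ (norm_nonneg u)
              refine le_trans (𝔖.gamma_lip _ _) ?_
              rw [add_sub_cancel_left, norm_smul, Real.norm_eq_abs, abs_of_pos (htpos n)]
      have hlowb : t n * ‖Y‖^2 - ε₀*(2*t n*‖Y‖)
          ≤ ⟪X + t n • Y - 𝔖.Λ (c n) (𝔖.γ X), Y⟫ := by
        have e : ⟪X + t n • Y - 𝔖.Λ (c n) (𝔖.γ X), Y⟫
            = t n * ‖Y‖^2 - ⟪𝔖.Λ (c n) (𝔖.γ X) - X, Y⟫ := by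
          rw [show X + t n • Y - 𝔖.Λ (c n) (𝔖.γ X)
              = t n • Y - (𝔖.Λ (c n) (𝔖.γ X) - X) by abel,
            inner_sub_left, real_inner_smul_left, real_inner_self_eq_norm_sq]
        rw [e]; linarith
      have hmul : (t n * ‖Y‖) * (‖Y‖ - 2*ε₀) ≤ (t n * ‖Y‖) * ‖u‖ := by
        nlinarith [hlowb, hupb]
      exact le_of_mul_le_mul_left hmul (by positivity)
    -- compactness
    have hmem : ∀ n, (𝔖.Λ (c n)).toContinuousLinearMap ∈ 𝔖.LambdaSet := fun n => ⟨c n, rfl⟩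
    obtain ⟨L, hLmem, ψ, hψ, hconv⟩ := (𝔖.lambdaSet_isCompact hcl).tendsto_subseq hmem
    obtain ⟨a, rfl⟩ := hLmem
    have ht0 : Tendsto t atTop (𝓝 0) := by
      rw [htdef]
      have h := tendsto_one_div_add_atTop_nhds_zero_nat.const_mul (δ/(2*‖Y‖+1))
      simpa using h
    have htψ : Tendsto (fun k => 2 * t (ψ k) * ‖Y‖) atTop (𝓝 0) := by
      have h3 : Tendsto (fun k => 2 * t (ψ k) * ‖Y‖) atTop (𝓝 (2 * 0 * ‖Y‖)) :=
        ((ht0.comp hψ.tendsto_atTop).const_mul 2).mul_const ‖Y‖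
      simpa using h3
    have hXa : X = 𝔖.Λ a (𝔖.γ X) := by
      have h1 : Tendsto (fun k => ((𝔖.Λ (c (ψ k))).toContinuousLinearMap) (𝔖.γ X)) atTop
          (𝓝 ((𝔖.Λ a).toContinuousLinearMap (𝔖.γ X))) := tendsto_clm_apply' hconv tendsto_const_nhds
      have h2 : Tendsto (fun k => ((𝔖.Λ (c (ψ k))).toContinuousLinearMap) (𝔖.γ X)) atTop (𝓝 X) := by
        apply tendsto_of_norm_sub_le (b := fun k => 2 * t (ψ k) * ‖Y‖) _ htψ
        intro k
        simpa [LinearIsometry.coe_toContinuousLinearMap] using hZX (ψ k)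
      have h4 := tendsto_nhds_unique h2 h1
      simpa [LinearIsometry.coe_toContinuousLinearMap] using h4
    refine ⟨a, hXa, ?_⟩
    set u := ContinuousLinearMap.adjoint (𝔖.Λ a).toContinuousLinearMap Y with hu
    have hadjc : Tendsto (fun k => ContinuousLinearMap.adjoint
        ((𝔖.Λ (c (ψ k))).toContinuousLinearMap)) atTop
        (𝓝 (ContinuousLinearMap.adjoint (𝔖.Λ a).toContinuousLinearMap)) :=
      ((ContinuousLinearMap.adjoint (𝕜 := ℝ) (E := 𝒳) (F := H)).continuous.tendsto _).comp hconv
    have h4 : Tendsto (fun k => ‖ContinuousLinearMap.adjoint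
        ((𝔖.Λ (c (ψ k))).toContinuousLinearMap) Y‖) atTop (𝓝 ‖u‖) :=
      (tendsto_clm_apply' hadjc tendsto_const_nhds).norm
    have h5 : ‖Y‖ - 2*ε₀ ≤ ‖u‖ := ge_of_tendsto' h4 (fun k => hadj (ψ k))
    have h6 := 𝔖.norm_sub_lambda_adj_sq a Y
    have h7 : ‖u‖ ≤ ‖Y‖ := 𝔖.adj_norm_le a Y
    have h8 : ‖Y - 𝔖.Λ a u‖^2 ≤ ε^2 := by
      rw [← hu] at h6
      rw [h6]
      have h9 : 4*ε₀*‖Y‖ = ε^2 := by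
        rw [hε₀def]; field_simp
      nlinarith [h5, h7, hε₀, norm_nonneg u]
    nlinarith [norm_nonneg (Y - 𝔖.Λ a u), hε, h8]

end SDS


/-- For an `S`-invariant `φ : 𝒳 → [-∞, +∞]` and `X ∈ H`:
`∂_L(φ ∘ γ)(X) = {Λ_a y : y ∈ ∂_L φ(γ(X)), a ∈ A_X}`. -/
theorem limiting_subdiff_spectral
    [FiniteDimensional ℝ 𝒳] [FiniteDimensional ℝ H]
    (𝔖 : SDS 𝒳 H S A) (hcl : IsClosed 𝔖.LambdaSet)
    (φ : 𝒳 → EReal) (hφ : ∀ (s : S) (x : 𝒳), φ (𝔖.act s x) = φ x)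
    (X : H) :
    lSubdiff (fun Z => φ (𝔖.γ Z)) X
      = {Y | ∃ y ∈ lSubdiff φ (𝔖.γ X), ∃ a ∈ 𝔖.AX X, Y = 𝔖.Λ a y} := by
  ext Y
  simp only [lSubdiff, SDS.AX, Set.mem_setOf_eq]
  constructor
  · rintro ⟨⟨r, hr⟩, X_, Y_, hF, hXt, hft, hYt⟩
    have hex : ∀ n, ∃ a : A, X_ n = 𝔖.Λ a (𝔖.γ (X_ n)) ∧
        ‖Y_ n - 𝔖.Λ a (ContinuousLinearMap.adjoint (𝔖.Λ a).toContinuousLinearMap (Y_ n))‖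
          ≤ 1/((n:ℝ)+1) :=
      fun n => 𝔖.approx hcl (hF n) (by positivity)
    choose c hc1 hc2 using hex
    have hmem : ∀ n, (𝔖.Λ (c n)).toContinuousLinearMap ∈ 𝔖.LambdaSet := fun n => ⟨c n, rfl⟩
    obtain ⟨L, hLmem, ψ, hψ, hconv⟩ := (𝔖.lambdaSet_isCompact hcl).tendsto_subseq hmem
    obtain ⟨a, rfl⟩ := hLmem
    set y := ContinuousLinearMap.adjoint (𝔖.Λ a).toContinuousLinearMap Y with hy
    have hXψ : Tendsto (fun k => X_ (ψ k)) atTop (𝓝 X) := hXt.comp hψ.tendsto_atTop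
    have hYψ : Tendsto (fun k => Y_ (ψ k)) atTop (𝓝 Y) := hYt.comp hψ.tendsto_atTop
    have hγψ : Tendsto (fun k => 𝔖.γ (X_ (ψ k))) atTop (𝓝 (𝔖.γ X)) := 𝔖.gamma_tendsto hXψ
    have hax : X = 𝔖.Λ a (𝔖.γ X) := by
      have h1 : Tendsto (fun k => ((𝔖.Λ (c (ψ k))).toContinuousLinearMap) (𝔖.γ (X_ (ψ k))))
          atTop (𝓝 ((𝔖.Λ a).toContinuousLinearMap (𝔖.γ X))) := tendsto_clm_apply' hconv hγψ
      have h2 : (fun k => ((𝔖.Λ (c (ψ k))).toContinuousLinearMap) (𝔖.γ (X_ (ψ k))))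
          = fun k => X_ (ψ k) := by
        funext k
        simp only [LinearIsometry.coe_toContinuousLinearMap]
        exact (hc1 (ψ k)).symm
      rw [h2] at h1
      have h3 := tendsto_nhds_unique hXψ h1
      simpa [LinearIsometry.coe_toContinuousLinearMap] using h3
    have hadjc : Tendsto (fun k => ContinuousLinearMap.adjoint
        ((𝔖.Λ (c (ψ k))).toContinuousLinearMap)) atTop
        (𝓝 (ContinuousLinearMap.adjoint (𝔖.Λ a).toContinuousLinearMap)) :=
      ((ContinuousLinearMap.adjoint (𝕜 := ℝ) (E := 𝒳) (F := H)).continuous.tendsto _).comp hconv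
    have hyconv : Tendsto (fun k => ContinuousLinearMap.adjoint
        ((𝔖.Λ (c (ψ k))).toContinuousLinearMap) (Y_ (ψ k))) atTop (𝓝 y) :=
      tendsto_clm_apply' hadjc hYψ
    have hymem : y ∈ lSubdiff φ (𝔖.γ X) := by
      refine ⟨⟨r, hr⟩, (fun k => 𝔖.γ (X_ (ψ k))),
        (fun k => ContinuousLinearMap.adjoint ((𝔖.Λ (c (ψ k))).toContinuousLinearMap) (Y_ (ψ k))),
        fun k => 𝔖.down hφ (hc1 (ψ k)) (hF (ψ k)), hγψ, ?_, hyconv⟩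
      exact hft.comp hψ.tendsto_atTop
    have hYeq : Y = 𝔖.Λ a y := by
      have hP : Tendsto (fun k => ((𝔖.Λ (c (ψ k))).toContinuousLinearMap)
          (ContinuousLinearMap.adjoint ((𝔖.Λ (c (ψ k))).toContinuousLinearMap) (Y_ (ψ k))))
          atTop (𝓝 ((𝔖.Λ a).toContinuousLinearMap y)) := tendsto_clm_apply' hconv hyconv
      have hP2 : Tendsto (fun k => ((𝔖.Λ (c (ψ k))).toContinuousLinearMap)
          (ContinuousLinearMap.adjoint ((𝔖.Λ (c (ψ k))).toContinuousLinearMap) (Y_ (ψ k))))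
          atTop (𝓝 Y) := by
        apply tendsto_of_norm_sub_le (b := fun k => 1/((ψ k : ℝ)+1) + ‖Y_ (ψ k) - Y‖)
        · intro k
          have e1 : ((𝔖.Λ (c (ψ k))).toContinuousLinearMap)
              (ContinuousLinearMap.adjoint ((𝔖.Λ (c (ψ k))).toContinuousLinearMap) (Y_ (ψ k))) - Y
              = -(Y_ (ψ k) - 𝔖.Λ (c (ψ k)) (ContinuousLinearMap.adjoint
                ((𝔖.Λ (c (ψ k))).toContinuousLinearMap) (Y_ (ψ k)))) + (Y_ (ψ k) - Y) := by
            simp only [LinearIsometry.coe_toContinuousLinearMap]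
            abel
          rw [e1]
          refine le_trans (norm_add_le _ _) ?_
          rw [norm_neg]
          have := hc2 (ψ k)
          linarith
        · have hb1 : Tendsto (fun k => 1/((ψ k:ℝ)+1)) atTop (𝓝 0) :=
            tendsto_one_div_add_atTop_nhds_zero_nat.comp hψ.tendsto_atTop
          have hb2 : Tendsto (fun k => ‖Y_ (ψ k) - Y‖) atTop (𝓝 0) :=
            tendsto_iff_norm_sub_tendsto_zero.1 hYψ
          simpa using hb1.add hb2
      have h3 := tendsto_nhds_unique hP2 hP
      simpa [LinearIsometry.coe_toContinuousLinearMap] using h3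
    exact ⟨y, hymem, a, hax, hYeq⟩
  · rintro ⟨y, hy, a, ha, rfl⟩
    obtain ⟨⟨r, hr⟩, xn, vn, hF, hxt, hft, hvt⟩ := hy
    refine ⟨⟨r, hr⟩, (fun n => 𝔖.Λ a (xn n)), (fun n => 𝔖.Λ a (vn n)),
      fun n => 𝔖.up hφ (hF n) a, ?_, ?_, ?_⟩
    · have h1 : Tendsto (fun n => 𝔖.Λ a (xn n)) atTop (𝓝 (𝔖.Λ a (𝔖.γ X))) :=
        ((𝔖.Λ a).continuous.tendsto (𝔖.γ X)).comp hxt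
      rwa [← ha] at h1
    · show Tendsto (fun n => φ (𝔖.γ (𝔖.Λ a (xn n)))) atTop (𝓝 (φ (𝔖.γ X)))
      have he : (fun n => φ (𝔖.γ (𝔖.Λ a (xn n)))) = fun n => φ (xn n) := by
        funext n; rw [𝔖.phi_gamma_lambda hφ]
      rw [he]; exact hft
    · exact ((𝔖.Λ a).continuous.tendsto y).comp hvt
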